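/- arXiv:1102.1400 — 5 statements merged into one kernel-verified Lean document; each statement's English description precedes it below -/
import Mathlib

section
/- Let 0 < p < 1/2, λ ∈ ℝ, and fix (x₀,y₀,z₀) ∈ H. Then the Riemann function V satisfies on the face x = x₀ the characteristic condition ∂V/∂y (x₀,y,z) = −(p/(x₀−y−z)) V(x₀,y,z) for all (y,z) with y₀ ≤ y, z₀ ≤ z and y + z < x₀. -/
open Real MeasureTheory Filter Topology

noncomputable section

/-- Pochhammer symbol `(a)_n = a (a+1) ⋯ (a+n-1)`. -/
def poch (a : ℝ) (n : ℕ) : ℝ := ∏ i ∈ Finset.range n, (a + i)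

/-- The Gauss hypergeometric series `F(a,b;c;z) = ∑ (a)_n (b)_n zⁿ / ((c)_n n!)`. -/
def gaussF (a b c z : ℝ) : ℝ :=
  ∑' n : ℕ, poch a n * poch b n / (poch c n * n.factorial) * z ^ n

/-- The region `H = {(x,y,z) : 0 < z < x − y, 0 < y < x}`. -/
def regH : Set (ℝ × ℝ × ℝ) :=
  {w | 0 < w.2.2 ∧ w.2.2 < w.1 - w.2.1 ∧ 0 < w.2.1 ∧ w.2.1 < w.1}

/-- The Riemann function (5) for the equation (1), with pole `(x₀, y₀, z₀)`
(the variable `z₀` does not enter the formula). -/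
def riemannV (p lam x₀ y₀ : ℝ) (x y z : ℝ) : ℝ :=
  (x - y - z) ^ (2 * p) * (x - y₀ - z) ^ (-p) * (x₀ - y - z) ^ (-p) *
    ∑' m : ℕ, (lam * (x₀ - x) * (y₀ - y)) ^ m / (poch 1 m * m.factorial) *
      gaussF p (p + m) (1 + m) ((x - x₀) * (y₀ - y) / ((x - y₀ - z) * (x₀ - y - z)))


lemma gaussF_zero (a b c : ℝ) : gaussF a b c 0 = 1 := by
  unfold gaussF
  rw [tsum_eq_single 0]
  · simp [poch]
  · intro n hn; simp [zero_pow hn]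

lemma riemannV_xeq (p lam x₀ y₀ y z : ℝ) :
    riemannV p lam x₀ y₀ x₀ y z =
      (x₀ - y - z) ^ (2 * p) * (x₀ - y₀ - z) ^ (-p) * (x₀ - y - z) ^ (-p) := by
  unfold riemannV
  have hs : (∑' m : ℕ, (lam * (x₀ - x₀) * (y₀ - y)) ^ m / (poch 1 m * m.factorial) *
      gaussF p (p + m) (1 + m) ((x₀ - x₀) * (y₀ - y) / ((x₀ - y₀ - z) * (x₀ - y - z)))) = 1 := by
    rw [tsum_eq_single 0]
    · simp [poch, gaussF_zero]
    · intro m hm; simp [zero_pow hm]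
  rw [hs, mul_one]

/-- On the characteristic face `x = x₀`, the Riemann function satisfies
`V_y = a V`, i.e. `∂V/∂y (x₀,y,z) = −(p/(x₀−y−z)) V(x₀,y,z)`. -/
theorem riemann_char_x (p lam : ℝ) (hp0 : 0 < p) (hp : p < 1 / 2)
    (x₀ y₀ z₀ : ℝ) (h₀ : (x₀, y₀, z₀) ∈ regH) :
    ∀ y z : ℝ, y₀ ≤ y → z₀ ≤ z → y + z < x₀ →
      deriv (fun t => riemannV p lam x₀ y₀ x₀ t z) y =
        -(p / (x₀ - y - z)) * riemannV p lam x₀ y₀ x₀ y z := by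
  intro y z hy hz hyz
  have hApos : 0 < x₀ - y - z := by linarith
  set C := (x₀ - y₀ - z) ^ (-p) with hC
  have hev : (fun t => riemannV p lam x₀ y₀ x₀ t z) =ᶠ[𝓝 y]
      (fun t => C * (x₀ - t - z) ^ p) := by
    have hcont : ContinuousAt (fun t : ℝ => x₀ - t - z) y := by fun_prop
    have h1 : ∀ᶠ t in 𝓝 y, 0 < x₀ - t - z :=
      hcont.eventually (eventually_gt_nhds hApos)
    filter_upwards [h1] with t ht
    rw [riemannV_xeq]
    calc (x₀ - t - z) ^ (2*p) * (x₀ - y₀ - z) ^ (-p) * (x₀ - t - z) ^ (-p)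
        = C * ((x₀ - t - z) ^ (2*p) * (x₀ - t - z) ^ (-p)) := by rw [hC]; ring
      _ = C * (x₀ - t - z) ^ (2*p + -p) := by rw [← Real.rpow_add ht]
      _ = C * (x₀ - t - z) ^ p := by rw [show 2*p + -p = p by ring]
  rw [hev.deriv_eq]
  have h1 : HasDerivAt (fun t : ℝ => x₀ - t - z) (-1) y := by
    simpa using ((hasDerivAt_id y).const_sub x₀).sub_const z
  have hd : HasDerivAt (fun t => C * (x₀ - t - z) ^ p)
      (C * (-1 * p * (x₀ - y - z) ^ (p - 1))) y :=
    (h1.rpow_const (Or.inl (ne_of_gt hApos))).const_mul C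
  rw [hd.deriv, riemannV_xeq]
  have e2 : (x₀ - y - z) ^ (p - 1) = (x₀ - y - z) ^ p / (x₀ - y - z) := by
    rw [Real.rpow_sub hApos, Real.rpow_one]
  have e1 : (x₀ - y - z) ^ (2*p) * (x₀ - y - z) ^ (-p) = (x₀ - y - z) ^ p := by
    rw [← Real.rpow_add hApos, show 2*p + -p = p by ring]
  calc C * (-1 * p * (x₀ - y - z) ^ (p - 1))
      = -(p / (x₀ - y - z)) * (((x₀ - y - z) ^ (2*p) * (x₀ - y - z) ^ (-p)) * C) := by
        rw [e1, e2]; ring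
    _ = -(p / (x₀ - y - z)) * ((x₀ - y - z) ^ (2 * p) * C * (x₀ - y - z) ^ (-p)) := by ring
end
end

section
/- Let 0 < p < 1/2, λ ∈ ℝ, and fix (x₀,y₀,z₀) ∈ H. Then the Riemann function V satisfies on the face y = y₀ the characteristic condition ∂²V/∂x∂z (x,y₀,z) − (p/(x−y₀−z)²) V(x,y₀,z) − (p/(x−y₀−z)) ∂V/∂z (x,y₀,z) = 0 for all (x,z) with z₀ ≤ z and y₀ + z < x ≤ x₀. -/
open Real MeasureTheory Filter Topology

noncomputable section

/-- On the face `y = y₀` the Riemann function reduces to a product of powers. -/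
lemma riemannV_face (p lam x₀ y₀ : ℝ) (t u : ℝ) :
    riemannV p lam x₀ y₀ t y₀ u =
      (t - y₀ - u) ^ (2 * p) * (t - y₀ - u) ^ (-p) * (x₀ - y₀ - u) ^ (-p) := by
  unfold riemannV
  have h0 : (t - x₀) * (y₀ - y₀) / ((t - y₀ - u) * (x₀ - y₀ - u)) = 0 := by ring
  rw [h0]
  have : (∑' m : ℕ, (lam * (x₀ - t) * (y₀ - y₀)) ^ m / (poch 1 m * m.factorial) *
      gaussF p (p + m) (1 + m) 0) = 1 := by
    rw [tsum_eq_single 0]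
    · simp [poch, gaussF_zero]
    · intro n hn
      simp [zero_pow hn]
  rw [this, mul_one]

/-- On the characteristic face `y = y₀`, the Riemann function satisfies
`V_xz − (p/(x−y₀−z)²) V − (p/(x−y₀−z)) V_z = 0`. -/
theorem riemann_char_y (p lam : ℝ) (hp0 : 0 < p) (hp : p < 1 / 2)
    (x₀ y₀ z₀ : ℝ) (h₀ : (x₀, y₀, z₀) ∈ regH) :
    ∀ x z : ℝ, z₀ ≤ z → y₀ + z < x → x ≤ x₀ →
      deriv (fun u => deriv (fun t => riemannV p lam x₀ y₀ t y₀ u) x) z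
        - p / (x - y₀ - z) ^ 2 * riemannV p lam x₀ y₀ x y₀ z
        - p / (x - y₀ - z) * deriv (fun u => riemannV p lam x₀ y₀ x y₀ u) z = 0 := by
  intro x z hz hxz hx
  have ha : 0 < x - y₀ - z := by linarith
  have hb : 0 < x₀ - y₀ - z := by linarith
  set a : ℝ := x - y₀ - z with ha_def
  set b : ℝ := x₀ - y₀ - z with hb_def
  -- inner derivative, valid for any u with positivity
  have L1 : ∀ u : ℝ, 0 < x - y₀ - u → 0 < x₀ - y₀ - u →
      deriv (fun t => riemannV p lam x₀ y₀ t y₀ u) x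
        = p * (x - y₀ - u) ^ (p - 1) * (x₀ - y₀ - u) ^ (-p) := by
    intro u hu1 hu2
    have he : (fun t => riemannV p lam x₀ y₀ t y₀ u)
        =ᶠ[𝓝 x] fun t => (t - y₀ - u) ^ p * (x₀ - y₀ - u) ^ (-p) := by
      have hc : ContinuousAt (fun t : ℝ => t - y₀ - u) x := by fun_prop
      filter_upwards [hc.eventually (eventually_gt_nhds hu1)] with t ht
      rw [riemannV_face, ← Real.rpow_add ht]
      ring_nf
    rw [he.deriv_eq]
    have h1 : HasDerivAt (fun t : ℝ => t - y₀ - u) 1 x := by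
      simpa using ((hasDerivAt_id x).sub_const y₀).sub_const u
    have h2 := (h1.rpow_const (p := p) (Or.inl hu1.ne')).mul_const ((x₀ - y₀ - u) ^ (-p))
    rw [h2.deriv]
    ring
  -- outer derivative in z
  have hc1 : ContinuousAt (fun u : ℝ => x - y₀ - u) z := by fun_prop
  have hc2 : ContinuousAt (fun u : ℝ => x₀ - y₀ - u) z := by fun_prop
  have hev1 := hc1.eventually (eventually_gt_nhds ha)
  have hev2 := hc2.eventually (eventually_gt_nhds hb)
  have hda : ∀ q : ℝ, HasDerivAt (fun u : ℝ => (x - y₀ - u) ^ q)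
      (-1 * q * a ^ (q - 1)) z := by
    intro q
    have h1 : HasDerivAt (fun u : ℝ => x - y₀ - u) (-1) z := by
      simpa using (hasDerivAt_id z).const_sub (x - y₀)
    exact h1.rpow_const (Or.inl ha.ne')
  have hdb : ∀ q : ℝ, HasDerivAt (fun u : ℝ => (x₀ - y₀ - u) ^ q)
      (-1 * q * b ^ (q - 1)) z := by
    intro q
    have h1 : HasDerivAt (fun u : ℝ => x₀ - y₀ - u) (-1) z := by
      simpa using (hasDerivAt_id z).const_sub (x₀ - y₀)
    exact h1.rpow_const (Or.inl hb.ne')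
  -- V_xz
  have hVxz : deriv (fun u => deriv (fun t => riemannV p lam x₀ y₀ t y₀ u) x) z
      = p * ((-1 * (p - 1) * a ^ (p - 1 - 1)) * b ^ (-p)
          + a ^ (p - 1) * (-1 * (-p) * b ^ (-p - 1))) := by
    have he : (fun u => deriv (fun t => riemannV p lam x₀ y₀ t y₀ u) x)
        =ᶠ[𝓝 z] fun u => p * ((x - y₀ - u) ^ (p - 1) * (x₀ - y₀ - u) ^ (-p)) := by
      filter_upwards [hev1, hev2] with u hu1 hu2
      rw [L1 u hu1 hu2]; ring
    rw [he.deriv_eq]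
    exact (((hda (p - 1)).mul (hdb (-p))).const_mul p).deriv
  -- V_z
  have hVz : deriv (fun u => riemannV p lam x₀ y₀ x y₀ u) z
      = (-1 * p * a ^ (p - 1)) * b ^ (-p) + a ^ p * (-1 * (-p) * b ^ (-p - 1)) := by
    have he : (fun u => riemannV p lam x₀ y₀ x y₀ u)
        =ᶠ[𝓝 z] fun u => (x - y₀ - u) ^ p * (x₀ - y₀ - u) ^ (-p) := by
      filter_upwards [hev1] with u hu1
      rw [riemannV_face, ← Real.rpow_add hu1]
      ring_nf
    rw [he.deriv_eq]
    exact ((hda p).mul (hdb (-p))).deriv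
  -- V
  have hV : riemannV p lam x₀ y₀ x y₀ z = a ^ p * b ^ (-p) := by
    rw [riemannV_face, ← Real.rpow_add ha]
    ring_nf
    rw [hb_def]
  rw [hVxz, hVz, hV]
  -- algebra
  have e1 : a ^ (p - 1) = a ^ p / a := Real.rpow_sub_one ha.ne' p
  have e2 : a ^ (p - 1 - 1) = a ^ p / a / a := by
    rw [Real.rpow_sub_one ha.ne' (p - 1), e1]
  have e3 : b ^ (-p - 1) = b ^ (-p) / b := Real.rpow_sub_one hb.ne' (-p)
  rw [e1, e2, e3]
  field_simp
  ring
end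
end

section
/- Let p, λ ∈ ℝ and let Ω ⊆ {(x,y,z) ∈ ℝ³ : x − y − z > 0} be open. Set a(x,y,z) = −p/(x−y−z) and b(x,y,z) = p/(x−y−z), and for three times continuously differentiable functions U, V on Ω define L(U) = U_xyz + a U_xz + b U_yz − λ U_z, L*(V) = −V_xyz + (aV)_xz + (bV)_yz + λ V_z, P = V U_yz + U V_yz − V_y U_z + 3 a V U_z, Q = V (U_xz − 3 b_z U) + U V_xz − V_z U_x − 3 b U V_z, and H = V (U_xy − 3 a_x U + 3 b U_y) − V_x U_y − 3 a U V_x + V_xy U − 3 λ U V. Then the Green identity V L(U) − U L*(V) = (1/3) (∂P/∂x + ∂Q/∂y + ∂H/∂z) holds at every point of Ω. -/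
open Real MeasureTheory Filter Topology

noncomputable section

/-- Partial derivative of `U(x,y,z)` in the first variable. -/
def pdx (U : ℝ → ℝ → ℝ → ℝ) (x y z : ℝ) : ℝ := deriv (fun t => U t y z) x

/-- Partial derivative of `U(x,y,z)` in the second variable. -/
def pdy (U : ℝ → ℝ → ℝ → ℝ) (x y z : ℝ) : ℝ := deriv (fun t => U x t z) y

/-- Partial derivative of `U(x,y,z)` in the third variable. -/
def pdz (U : ℝ → ℝ → ℝ → ℝ) (x y z : ℝ) : ℝ := deriv (fun t => U x y t) z

/-- `L(U) = U_xyz + a U_xz + b U_yz − λ U_z` with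
`a = −p/(x−y−z)` and `b = p/(x−y−z)`. -/
def Lop (p lam : ℝ) (U : ℝ → ℝ → ℝ → ℝ) (x y z : ℝ) : ℝ :=
  pdz (pdy (pdx U)) x y z + (-p / (x - y - z)) * pdz (pdx U) x y z
    + p / (x - y - z) * pdz (pdy U) x y z - lam * pdz U x y z

/-- Conjugate operator `L*(V) = −V_xyz + (aV)_xz + (bV)_yz + λ V_z`. -/
def Lstar (p lam : ℝ) (V : ℝ → ℝ → ℝ → ℝ) (x y z : ℝ) : ℝ :=
  - pdz (pdy (pdx V)) x y z
    + pdz (pdx (fun x' y' z' => (-p / (x' - y' - z')) * V x' y' z')) x y z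
    + pdz (pdy (fun x' y' z' => (p / (x' - y' - z')) * V x' y' z')) x y z
    + lam * pdz V x y z

/-- `P = V U_yz + U V_yz − V_y U_z + 3 a V U_z`. -/
def Pfun (p : ℝ) (U V : ℝ → ℝ → ℝ → ℝ) (x y z : ℝ) : ℝ :=
  V x y z * pdz (pdy U) x y z + U x y z * pdz (pdy V) x y z
    - pdy V x y z * pdz U x y z + 3 * (-p / (x - y - z)) * V x y z * pdz U x y z

/-- `Q = V (U_xz − 3 b_z U) + U V_xz − V_z U_x − 3 b U V_z`. -/
def Qfun (p : ℝ) (U V : ℝ → ℝ → ℝ → ℝ) (x y z : ℝ) : ℝ :=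
  V x y z * (pdz (pdx U) x y z - 3 * deriv (fun t => p / (x - y - t)) z * U x y z)
    + U x y z * pdz (pdx V) x y z - pdz V x y z * pdx U x y z
    - 3 * (p / (x - y - z)) * U x y z * pdz V x y z

/-- `H = V (U_xy − 3 a_x U + 3 b U_y) − V_x U_y − 3 a U V_x + V_xy U − 3 λ U V`. -/
def Hfun (p lam : ℝ) (U V : ℝ → ℝ → ℝ → ℝ) (x y z : ℝ) : ℝ :=
  V x y z * (pdy (pdx U) x y z - 3 * deriv (fun t => -p / (t - y - z)) x * U x y z
      + 3 * (p / (x - y - z)) * pdy U x y z)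
    - pdx V x y z * pdy U x y z - 3 * (-p / (x - y - z)) * U x y z * pdx V x y z
    + pdy (pdx V) x y z * U x y z - 3 * lam * U x y z * V x y z


/-! ### Auxiliary machinery -/

def d1 (F : ℝ × ℝ × ℝ → ℝ) (w : ℝ × ℝ × ℝ) : ℝ := fderiv ℝ F w (1, 0, 0)
def d2 (F : ℝ × ℝ × ℝ → ℝ) (w : ℝ × ℝ × ℝ) : ℝ := fderiv ℝ F w (0, 1, 0)
def d3 (F : ℝ × ℝ × ℝ → ℝ) (w : ℝ × ℝ × ℝ) : ℝ := fderiv ℝ F w (0, 0, 1)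

def JJ (U : ℝ → ℝ → ℝ → ℝ) : ℝ × ℝ × ℝ → ℝ := fun w => U w.1 w.2.1 w.2.2

lemma slice1 {F : ℝ × ℝ × ℝ → ℝ} {x y z : ℝ} (hf : DifferentiableAt ℝ F (x, y, z)) :
    HasDerivAt (fun t => F (t, y, z)) (d1 F (x, y, z)) x := by
  have hγ : HasDerivAt (fun t : ℝ => ((t, y, z) : ℝ × ℝ × ℝ)) ((1 : ℝ), (0 : ℝ), (0 : ℝ)) x :=
    (hasDerivAt_id x).prodMk ((hasDerivAt_const x y).prodMk (hasDerivAt_const x z))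
  exact hf.hasFDerivAt.comp_hasDerivAt x hγ

lemma slice2 {F : ℝ × ℝ × ℝ → ℝ} {x y z : ℝ} (hf : DifferentiableAt ℝ F (x, y, z)) :
    HasDerivAt (fun t => F (x, t, z)) (d2 F (x, y, z)) y := by
  have hγ : HasDerivAt (fun t : ℝ => ((x, t, z) : ℝ × ℝ × ℝ)) ((0 : ℝ), (1 : ℝ), (0 : ℝ)) y :=
    (hasDerivAt_const y x).prodMk ((hasDerivAt_id y).prodMk (hasDerivAt_const y z))
  exact hf.hasFDerivAt.comp_hasDerivAt y hγ

lemma slice3 {F : ℝ × ℝ × ℝ → ℝ} {x y z : ℝ} (hf : DifferentiableAt ℝ F (x, y, z)) :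
    HasDerivAt (fun t => F (x, y, t)) (d3 F (x, y, z)) z := by
  have hγ : HasDerivAt (fun t : ℝ => ((x, y, t) : ℝ × ℝ × ℝ)) ((0 : ℝ), (0 : ℝ), (1 : ℝ)) z :=
    (hasDerivAt_const z x).prodMk ((hasDerivAt_const z y).prodMk (hasDerivAt_id z))
  exact hf.hasFDerivAt.comp_hasDerivAt z hγ

section Aux

variable {Ω : Set (ℝ × ℝ × ℝ)} {F G : ℝ × ℝ × ℝ → ℝ} {g : ℝ → ℝ → ℝ → ℝ}

lemma contDiffOn_d {n m : WithTop ℕ∞} (hΩ : IsOpen Ω) (hF : ContDiffOn ℝ n F Ω)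
    (hmn : m + 1 ≤ n) (v : ℝ × ℝ × ℝ) :
    ContDiffOn ℝ m (fun w => fderiv ℝ F w v) Ω :=
  (hF.fderiv_of_isOpen hΩ hmn).clm_apply contDiffOn_const

lemma d_comm (hΩ : IsOpen Ω) (hF : ContDiffOn ℝ 2 F Ω) {w : ℝ × ℝ × ℝ} (hw : w ∈ Ω)
    (u v : ℝ × ℝ × ℝ) :
    fderiv ℝ (fun x => fderiv ℝ F x u) w v = fderiv ℝ (fun x => fderiv ℝ F x v) w u := by
  have hd : DifferentiableAt ℝ (fderiv ℝ F) w :=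
    ((hF.fderiv_of_isOpen hΩ (m := 1) (by norm_num)).differentiableOn one_ne_zero).differentiableAt
      (hΩ.mem_nhds hw)
  have hsymm : IsSymmSndFDerivAt ℝ F w :=
    (hF.contDiffAt (hΩ.mem_nhds hw)).isSymmSndFDerivAt (by norm_num)
  have h1 : ∀ a : ℝ × ℝ × ℝ, ∀ b : ℝ × ℝ × ℝ,
      fderiv ℝ (fun x => fderiv ℝ F x a) w b = fderiv ℝ (fderiv ℝ F) w b a := by
    intro a b
    rw [fderiv_clm_apply hd (differentiableAt_const a)]
    simp
  rw [h1, h1, hsymm.eq]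

lemma d3_congr {f g : ℝ × ℝ × ℝ → ℝ} {w : ℝ × ℝ × ℝ} (h : f =ᶠ[𝓝 w] g) :
    d3 f w = d3 g w := by unfold d3; rw [h.fderiv_eq]

lemma ev_mem1 (hΩ : IsOpen Ω) {x y z : ℝ} (hw : (x, y, z) ∈ Ω) :
    ∀ᶠ t in 𝓝 x, ((t, y, z) : ℝ × ℝ × ℝ) ∈ Ω := by
  have hc : Continuous fun t : ℝ => ((t, y, z) : ℝ × ℝ × ℝ) := by fun_prop
  exact hc.continuousAt.preimage_mem_nhds (hΩ.mem_nhds hw)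

lemma ev_mem2 (hΩ : IsOpen Ω) {x y z : ℝ} (hw : (x, y, z) ∈ Ω) :
    ∀ᶠ t in 𝓝 y, ((x, t, z) : ℝ × ℝ × ℝ) ∈ Ω := by
  have hc : Continuous fun t : ℝ => ((x, t, z) : ℝ × ℝ × ℝ) := by fun_prop
  exact hc.continuousAt.preimage_mem_nhds (hΩ.mem_nhds hw)

lemma ev_mem3 (hΩ : IsOpen Ω) {x y z : ℝ} (hw : (x, y, z) ∈ Ω) :
    ∀ᶠ t in 𝓝 z, ((x, y, t) : ℝ × ℝ × ℝ) ∈ Ω := by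
  have hc : Continuous fun t : ℝ => ((x, y, t) : ℝ × ℝ × ℝ) := by fun_prop
  exact hc.continuousAt.preimage_mem_nhds (hΩ.mem_nhds hw)

lemma pdx_agree (hΩ : IsOpen Ω) (hG : DifferentiableOn ℝ G Ω)
    (hg : ∀ x y z, (x, y, z) ∈ Ω → g x y z = G (x, y, z)) :
    ∀ x y z, (x, y, z) ∈ Ω → pdx g x y z = d1 G (x, y, z) := by
  intro x y z hw
  have h1 : HasDerivAt (fun t => G (t, y, z)) (d1 G (x, y, z)) x :=
    slice1 (hG.differentiableAt (hΩ.mem_nhds hw))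
  have h2 : HasDerivAt (fun t => g t y z) (d1 G (x, y, z)) x := by
    apply h1.congr_of_eventuallyEq
    filter_upwards [ev_mem1 hΩ hw] with t ht
    exact hg _ _ _ ht
  exact h2.deriv

lemma pdy_agree (hΩ : IsOpen Ω) (hG : DifferentiableOn ℝ G Ω)
    (hg : ∀ x y z, (x, y, z) ∈ Ω → g x y z = G (x, y, z)) :
    ∀ x y z, (x, y, z) ∈ Ω → pdy g x y z = d2 G (x, y, z) := by
  intro x y z hw
  have h1 : HasDerivAt (fun t => G (x, t, z)) (d2 G (x, y, z)) y :=
    slice2 (hG.differentiableAt (hΩ.mem_nhds hw))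
  have h2 : HasDerivAt (fun t => g x t z) (d2 G (x, y, z)) y := by
    apply h1.congr_of_eventuallyEq
    filter_upwards [ev_mem2 hΩ hw] with t ht
    exact hg _ _ _ ht
  exact h2.deriv

lemma pdz_agree (hΩ : IsOpen Ω) (hG : DifferentiableOn ℝ G Ω)
    (hg : ∀ x y z, (x, y, z) ∈ Ω → g x y z = G (x, y, z)) :
    ∀ x y z, (x, y, z) ∈ Ω → pdz g x y z = d3 G (x, y, z) := by
  intro x y z hw
  have h1 : HasDerivAt (fun t => G (x, y, t)) (d3 G (x, y, z)) z :=
    slice3 (hG.differentiableAt (hΩ.mem_nhds hw))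
  have h2 : HasDerivAt (fun t => g x y t) (d3 G (x, y, z)) z := by
    apply h1.congr_of_eventuallyEq
    filter_upwards [ev_mem3 hΩ hw] with t ht
    exact hg _ _ _ ht
  exact h2.deriv

lemma hasDerivAt_q_div (q : ℝ) {f : ℝ → ℝ} {f' t : ℝ} (hf : HasDerivAt f f' t)
    (h : f t ≠ 0) : HasDerivAt (fun u => q / f u) (-q * f' / f t ^ 2) t := by
  have h1 := (hf.inv h).const_mul q
  have h2 : (fun u => q * f⁻¹ u) = fun u => q / f u := by
    funext u; rw [Pi.inv_apply, div_eq_mul_inv]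
  rw [h2] at h1
  exact h1.congr_deriv (by ring)

lemma ratA1 (p y z : ℝ) {x : ℝ} (h : x - y - z ≠ 0) :
    HasDerivAt (fun t => -p / (t - y - z)) (p / (x - y - z) ^ 2) x := by
  have hl : HasDerivAt (fun t : ℝ => t - y - z) 1 x :=
    ((hasDerivAt_id x).sub_const y).sub_const z
  have h1 := hasDerivAt_q_div (-p) hl h
  convert h1 using 1
  ring

lemma ratB2 (p x z : ℝ) {y : ℝ} (h : x - y - z ≠ 0) :
    HasDerivAt (fun t => p / (x - t - z)) (p / (x - y - z) ^ 2) y := by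
  have hl : HasDerivAt (fun t : ℝ => x - t - z) (-1) y :=
    ((hasDerivAt_id y).const_sub x).sub_const z
  have h1 := hasDerivAt_q_div p hl h
  convert h1 using 1
  ring

lemma ratB3 (p x y : ℝ) {z : ℝ} (h : x - y - z ≠ 0) :
    HasDerivAt (fun t => p / (x - y - t)) (p / (x - y - z) ^ 2) z := by
  have hl : HasDerivAt (fun t : ℝ => x - y - t) (-1) z := (hasDerivAt_id z).const_sub (x - y)
  have h1 := hasDerivAt_q_div p hl h
  convert h1 using 1
  ring

lemma ratA3 (p x y : ℝ) {z : ℝ} (h : x - y - z ≠ 0) :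
    HasDerivAt (fun t => -p / (x - y - t)) (-p / (x - y - z) ^ 2) z := by
  have hl : HasDerivAt (fun t : ℝ => x - y - t) (-1) z := (hasDerivAt_id z).const_sub (x - y)
  have h1 := hasDerivAt_q_div (-p) hl h
  convert h1 using 1
  ring

lemma ratSq2 (p x z : ℝ) {y : ℝ} (h : x - y - z ≠ 0) :
    HasDerivAt (fun t => p / (x - t - z) ^ 2) (2 * p / (x - y - z) ^ 3) y := by
  have hl : HasDerivAt (fun t : ℝ => x - t - z) (-1) y :=
    ((hasDerivAt_id y).const_sub x).sub_const z
  have h1 := hasDerivAt_q_div p (hl.fun_pow 2) (pow_ne_zero 2 h)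
  convert h1 using 1
  field_simp
  ring

lemma ratSq3 (p x y : ℝ) {z : ℝ} (h : x - y - z ≠ 0) :
    HasDerivAt (fun t => p / (x - y - t) ^ 2) (2 * p / (x - y - z) ^ 3) z := by
  have hl : HasDerivAt (fun t : ℝ => x - y - t) (-1) z := (hasDerivAt_id z).const_sub (x - y)
  have h1 := hasDerivAt_q_div p (hl.fun_pow 2) (pow_ne_zero 2 h)
  convert h1 using 1
  field_simp
  ring

lemma deriv_bz (p x y z : ℝ) (h : x - y - z ≠ 0) :
    deriv (fun t => p / (x - y - t)) z = p / (x - y - z) ^ 2 :=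
  (ratB3 p x y h).deriv

lemma deriv_ax (p x y z : ℝ) (h : x - y - z ≠ 0) :
    deriv (fun t => -p / (t - y - z)) x = p / (x - y - z) ^ 2 :=
  (ratA1 p y z h).deriv

end Aux

set_option maxHeartbeats 4000000 in
/-- **Green identity (7):** for three times continuously differentiable `U, V` on an open
set `Ω ⊆ {x − y − z > 0}`, one has
`V L(U) − U L*(V) = (1/3) (P_x + Q_y + H_z)` at every point of `Ω`. -/
theorem green_identity (p lam : ℝ) (Ω : Set (ℝ × ℝ × ℝ)) (hΩopen : IsOpen Ω)
    (hΩ : Ω ⊆ {w : ℝ × ℝ × ℝ | w.1 - w.2.1 - w.2.2 > 0})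
    (U V : ℝ → ℝ → ℝ → ℝ)
    (hU : ContDiffOn ℝ 3 (fun w : ℝ × ℝ × ℝ => U w.1 w.2.1 w.2.2) Ω)
    (hV : ContDiffOn ℝ 3 (fun w : ℝ × ℝ × ℝ => V w.1 w.2.1 w.2.2) Ω) :
    ∀ w ∈ Ω,
      V w.1 w.2.1 w.2.2 * Lop p lam U w.1 w.2.1 w.2.2
        - U w.1 w.2.1 w.2.2 * Lstar p lam V w.1 w.2.1 w.2.2 =
      (1 / 3) * (pdx (Pfun p U V) w.1 w.2.1 w.2.2
        + pdy (Qfun p U V) w.1 w.2.1 w.2.2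
        + pdz (Hfun p lam U V) w.1 w.2.1 w.2.2) := by
  intro w hw
  obtain ⟨x, y, z⟩ := w
  dsimp only at hw ⊢
  have hs : x - y - z > 0 := hΩ hw
  have h0 : x - y - z ≠ 0 := ne_of_gt hs
  -- smoothness bookkeeping
  have cU3 : ContDiffOn ℝ 3 (JJ U) Ω := hU
  have cV3 : ContDiffOn ℝ 3 (JJ V) Ω := hV
  have cU2 : ContDiffOn ℝ 2 (JJ U) Ω := cU3.of_le (by norm_num)
  have cV2 : ContDiffOn ℝ 2 (JJ V) Ω := cV3.of_le (by norm_num)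
  have cdU1 : ContDiffOn ℝ 2 (d1 (JJ U)) Ω := contDiffOn_d hΩopen cU3 (by norm_num) _
  have cdU2 : ContDiffOn ℝ 2 (d2 (JJ U)) Ω := contDiffOn_d hΩopen cU3 (by norm_num) _
  have cdU3 : ContDiffOn ℝ 2 (d3 (JJ U)) Ω := contDiffOn_d hΩopen cU3 (by norm_num) _
  have cdV1 : ContDiffOn ℝ 2 (d1 (JJ V)) Ω := contDiffOn_d hΩopen cV3 (by norm_num) _
  have cdV2 : ContDiffOn ℝ 2 (d2 (JJ V)) Ω := contDiffOn_d hΩopen cV3 (by norm_num) _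
  have cdV3 : ContDiffOn ℝ 2 (d3 (JJ V)) Ω := contDiffOn_d hΩopen cV3 (by norm_num) _
  have cdU21 : ContDiffOn ℝ 1 (d2 (d1 (JJ U))) Ω := contDiffOn_d hΩopen cdU1 (by norm_num) _
  have cdU31 : ContDiffOn ℝ 1 (d3 (d1 (JJ U))) Ω := contDiffOn_d hΩopen cdU1 (by norm_num) _
  have cdU32 : ContDiffOn ℝ 1 (d3 (d2 (JJ U))) Ω := contDiffOn_d hΩopen cdU2 (by norm_num) _
  have cdV21 : ContDiffOn ℝ 1 (d2 (d1 (JJ V))) Ω := contDiffOn_d hΩopen cdV1 (by norm_num) _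
  have cdV31 : ContDiffOn ℝ 1 (d3 (d1 (JJ V))) Ω := contDiffOn_d hΩopen cdV1 (by norm_num) _
  have cdV32 : ContDiffOn ℝ 1 (d3 (d2 (JJ V))) Ω := contDiffOn_d hΩopen cdV2 (by norm_num) _
  have dAt : ∀ {f : ℝ × ℝ × ℝ → ℝ}, ContDiffOn ℝ 1 f Ω → DifferentiableAt ℝ f (x, y, z) :=
    fun h => (h.differentiableOn one_ne_zero).differentiableAt (hΩopen.mem_nhds hw)
  -- agreement tables
  have tU1 : ∀ a b c, (a, b, c) ∈ Ω → pdx U a b c = d1 (JJ U) (a, b, c) :=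
    pdx_agree hΩopen (cU3.differentiableOn (by norm_num)) (fun _ _ _ _ => rfl)
  have tU2 : ∀ a b c, (a, b, c) ∈ Ω → pdy U a b c = d2 (JJ U) (a, b, c) :=
    pdy_agree hΩopen (cU3.differentiableOn (by norm_num)) (fun _ _ _ _ => rfl)
  have tU3 : ∀ a b c, (a, b, c) ∈ Ω → pdz U a b c = d3 (JJ U) (a, b, c) :=
    pdz_agree hΩopen (cU3.differentiableOn (by norm_num)) (fun _ _ _ _ => rfl)
  have tV1 : ∀ a b c, (a, b, c) ∈ Ω → pdx V a b c = d1 (JJ V) (a, b, c) :=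
    pdx_agree hΩopen (cV3.differentiableOn (by norm_num)) (fun _ _ _ _ => rfl)
  have tV2 : ∀ a b c, (a, b, c) ∈ Ω → pdy V a b c = d2 (JJ V) (a, b, c) :=
    pdy_agree hΩopen (cV3.differentiableOn (by norm_num)) (fun _ _ _ _ => rfl)
  have tV3 : ∀ a b c, (a, b, c) ∈ Ω → pdz V a b c = d3 (JJ V) (a, b, c) :=
    pdz_agree hΩopen (cV3.differentiableOn (by norm_num)) (fun _ _ _ _ => rfl)
  have tU21 : ∀ a b c, (a, b, c) ∈ Ω → pdy (pdx U) a b c = d2 (d1 (JJ U)) (a, b, c) :=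
    pdy_agree hΩopen (cdU1.differentiableOn (by norm_num)) tU1
  have tU31 : ∀ a b c, (a, b, c) ∈ Ω → pdz (pdx U) a b c = d3 (d1 (JJ U)) (a, b, c) :=
    pdz_agree hΩopen (cdU1.differentiableOn (by norm_num)) tU1
  have tU32 : ∀ a b c, (a, b, c) ∈ Ω → pdz (pdy U) a b c = d3 (d2 (JJ U)) (a, b, c) :=
    pdz_agree hΩopen (cdU2.differentiableOn (by norm_num)) tU2
  have tV21 : ∀ a b c, (a, b, c) ∈ Ω → pdy (pdx V) a b c = d2 (d1 (JJ V)) (a, b, c) :=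
    pdy_agree hΩopen (cdV1.differentiableOn (by norm_num)) tV1
  have tV31 : ∀ a b c, (a, b, c) ∈ Ω → pdz (pdx V) a b c = d3 (d1 (JJ V)) (a, b, c) :=
    pdz_agree hΩopen (cdV1.differentiableOn (by norm_num)) tV1
  have tV32 : ∀ a b c, (a, b, c) ∈ Ω → pdz (pdy V) a b c = d3 (d2 (JJ V)) (a, b, c) :=
    pdz_agree hΩopen (cdV2.differentiableOn (by norm_num)) tV2
  have tU321 : ∀ a b c, (a, b, c) ∈ Ω →
      pdz (pdy (pdx U)) a b c = d3 (d2 (d1 (JJ U))) (a, b, c) :=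
    pdz_agree hΩopen (cdU21.differentiableOn one_ne_zero) tU21
  have tV321 : ∀ a b c, (a, b, c) ∈ Ω →
      pdz (pdy (pdx V)) a b c = d3 (d2 (d1 (JJ V))) (a, b, c) :=
    pdz_agree hΩopen (cdV21.differentiableOn one_ne_zero) tV21
  -- agreement for the coefficient-times-V composites
  have tAV : ∀ a b c, (a, b, c) ∈ Ω →
      pdx (fun x' y' z' => -p / (x' - y' - z') * V x' y' z') a b c
        = p / (a - b - c) ^ 2 * V a b c + -p / (a - b - c) * d1 (JJ V) (a, b, c) := by
    intro a b c hw2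
    have h0' : a - b - c ≠ 0 := ne_of_gt (hΩ hw2)
    have h2 : HasDerivAt (fun t => V t b c) (d1 (JJ V) (a, b, c)) a :=
      slice1 ((cV3.differentiableOn (by norm_num)).differentiableAt (hΩopen.mem_nhds hw2))
    exact ((ratA1 p b c h0').mul h2).deriv
  have tBV : ∀ a b c, (a, b, c) ∈ Ω →
      pdy (fun x' y' z' => p / (x' - y' - z') * V x' y' z') a b c
        = p / (a - b - c) ^ 2 * V a b c + p / (a - b - c) * d2 (JJ V) (a, b, c) := by
    intro a b c hw2
    have h0' : a - b - c ≠ 0 := ne_of_gt (hΩ hw2)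
    have h2 : HasDerivAt (fun t => V a t c) (d2 (JJ V) (a, b, c)) b :=
      slice2 ((cV3.differentiableOn (by norm_num)).differentiableAt (hΩopen.mem_nhds hw2))
    exact ((ratB2 p a c h0').mul h2).deriv
  -- slice derivative facts at the point (x, y, z)
  have hUx : HasDerivAt (fun t => U t y z) (d1 (JJ U) (x, y, z)) x :=
    slice1 (dAt (cU3.of_le (by norm_num)))
  have hVx : HasDerivAt (fun t => V t y z) (d1 (JJ V) (x, y, z)) x :=
    slice1 (dAt (cV3.of_le (by norm_num)))
  have hUy : HasDerivAt (fun t => U x t z) (d2 (JJ U) (x, y, z)) y :=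
    slice2 (dAt (cU3.of_le (by norm_num)))
  have hVy : HasDerivAt (fun t => V x t z) (d2 (JJ V) (x, y, z)) y :=
    slice2 (dAt (cV3.of_le (by norm_num)))
  have hUz : HasDerivAt (fun t => U x y t) (d3 (JJ U) (x, y, z)) z :=
    slice3 (dAt (cU3.of_le (by norm_num)))
  have hVz : HasDerivAt (fun t => V x y t) (d3 (JJ V) (x, y, z)) z :=
    slice3 (dAt (cV3.of_le (by norm_num)))
  have hU32x : HasDerivAt (fun t => d3 (d2 (JJ U)) (t, y, z))
      (d1 (d3 (d2 (JJ U))) (x, y, z)) x := slice1 (dAt cdU32)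
  have hV32x : HasDerivAt (fun t => d3 (d2 (JJ V)) (t, y, z))
      (d1 (d3 (d2 (JJ V))) (x, y, z)) x := slice1 (dAt cdV32)
  have hV2x : HasDerivAt (fun t => d2 (JJ V) (t, y, z)) (d1 (d2 (JJ V)) (x, y, z)) x :=
    slice1 (dAt (cdV2.of_le (by norm_num)))
  have hU3x : HasDerivAt (fun t => d3 (JJ U) (t, y, z)) (d1 (d3 (JJ U)) (x, y, z)) x :=
    slice1 (dAt (cdU3.of_le (by norm_num)))
  have hU31y : HasDerivAt (fun t => d3 (d1 (JJ U)) (x, t, z))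
      (d2 (d3 (d1 (JJ U))) (x, y, z)) y := slice2 (dAt cdU31)
  have hV31y : HasDerivAt (fun t => d3 (d1 (JJ V)) (x, t, z))
      (d2 (d3 (d1 (JJ V))) (x, y, z)) y := slice2 (dAt cdV31)
  have hV3y : HasDerivAt (fun t => d3 (JJ V) (x, t, z)) (d2 (d3 (JJ V)) (x, y, z)) y :=
    slice2 (dAt (cdV3.of_le (by norm_num)))
  have hU1y : HasDerivAt (fun t => d1 (JJ U) (x, t, z)) (d2 (d1 (JJ U)) (x, y, z)) y :=
    slice2 (dAt (cdU1.of_le (by norm_num)))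
  have hU21z : HasDerivAt (fun t => d2 (d1 (JJ U)) (x, y, t))
      (d3 (d2 (d1 (JJ U))) (x, y, z)) z := slice3 (dAt cdU21)
  have hV21z : HasDerivAt (fun t => d2 (d1 (JJ V)) (x, y, t))
      (d3 (d2 (d1 (JJ V))) (x, y, z)) z := slice3 (dAt cdV21)
  have hU2z : HasDerivAt (fun t => d2 (JJ U) (x, y, t)) (d3 (d2 (JJ U)) (x, y, z)) z :=
    slice3 (dAt (cdU2.of_le (by norm_num)))
  have hV1z : HasDerivAt (fun t => d1 (JJ V) (x, y, t)) (d3 (d1 (JJ V)) (x, y, z)) z :=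
    slice3 (dAt (cdV1.of_le (by norm_num)))
  have hV2z : HasDerivAt (fun t => d2 (JJ V) (x, y, t)) (d3 (d2 (JJ V)) (x, y, z)) z :=
    slice3 (dAt (cdV2.of_le (by norm_num)))
  -- the composite pdz (pdx (aV)) term
  have eAV : (fun t => pdx (fun x' y' z' => -p / (x' - y' - z') * V x' y' z') x y t)
      =ᶠ[𝓝 z] (fun t => p / (x - y - t) ^ 2 * V x y t
        + -p / (x - y - t) * d1 (JJ V) (x, y, t)) := by
    filter_upwards [ev_mem3 hΩopen hw] with t ht
    exact tAV x y t ht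
  have kAV := ((ratSq3 p x y h0).mul hVz).add ((ratA3 p x y h0).mul hV1z)
  have hAV : pdz (pdx (fun x' y' z' => -p / (x' - y' - z') * V x' y' z')) x y z
      = deriv (fun t => p / (x - y - t) ^ 2 * V x y t
        + -p / (x - y - t) * d1 (JJ V) (x, y, t)) z := by
    simp only [pdz]
    exact eAV.deriv_eq
  have hAVfull := hAV.trans kAV.deriv
  -- the composite pdz (pdy (bV)) term
  have eBV : (fun t => pdy (fun x' y' z' => p / (x' - y' - z') * V x' y' z') x y t)
      =ᶠ[𝓝 z] (fun t => p / (x - y - t) ^ 2 * V x y t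
        + p / (x - y - t) * d2 (JJ V) (x, y, t)) := by
    filter_upwards [ev_mem3 hΩopen hw] with t ht
    exact tBV x y t ht
  have kBV := ((ratSq3 p x y h0).mul hVz).add ((ratB3 p x y h0).mul hV2z)
  have hBV : pdz (pdy (fun x' y' z' => p / (x' - y' - z') * V x' y' z')) x y z
      = deriv (fun t => p / (x - y - t) ^ 2 * V x y t
        + p / (x - y - t) * d2 (JJ V) (x, y, t)) z := by
    simp only [pdz]
    exact eBV.deriv_eq
  have hBVfull := hBV.trans kBV.deriv
  -- P_x
  have eP : (fun t => Pfun p U V t y z) =ᶠ[𝓝 x] (fun t =>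
      V t y z * d3 (d2 (JJ U)) (t, y, z) + U t y z * d3 (d2 (JJ V)) (t, y, z)
        - d2 (JJ V) (t, y, z) * d3 (JJ U) (t, y, z)
        + 3 * (-p / (t - y - z)) * V t y z * d3 (JJ U) (t, y, z)) := by
    filter_upwards [ev_mem1 hΩopen hw] with t ht
    simp only [Pfun]
    rw [tU32 t y z ht, tV32 t y z ht, tV2 t y z ht, tU3 t y z ht]
  have kP := (((hVx.mul hU32x).add (hUx.mul hV32x)).sub (hV2x.mul hU3x)).add
    ((((ratA1 p y z h0).const_mul 3).mul hVx).mul hU3x)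
  have hPx : pdx (Pfun p U V) x y z = deriv (fun t =>
      V t y z * d3 (d2 (JJ U)) (t, y, z) + U t y z * d3 (d2 (JJ V)) (t, y, z)
        - d2 (JJ V) (t, y, z) * d3 (JJ U) (t, y, z)
        + 3 * (-p / (t - y - z)) * V t y z * d3 (JJ U) (t, y, z)) x := by
    simp only [pdx]
    exact eP.deriv_eq
  have hPfull := hPx.trans kP.deriv
  -- Q_y
  have eQ : (fun t => Qfun p U V x t z) =ᶠ[𝓝 y] (fun t =>
      V x t z * (d3 (d1 (JJ U)) (x, t, z) - 3 * (p / (x - t - z) ^ 2) * U x t z)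
        + U x t z * d3 (d1 (JJ V)) (x, t, z) - d3 (JJ V) (x, t, z) * d1 (JJ U) (x, t, z)
        - 3 * (p / (x - t - z)) * U x t z * d3 (JJ V) (x, t, z)) := by
    filter_upwards [ev_mem2 hΩopen hw] with t ht
    have h0t : x - t - z ≠ 0 := ne_of_gt (hΩ ht)
    simp only [Qfun]
    rw [deriv_bz p x t z h0t, tU31 x t z ht, tV31 x t z ht, tV3 x t z ht, tU1 x t z ht]
  have kQ := (((hVy.mul (hU31y.sub (((ratSq2 p x z h0).const_mul 3).mul hUy))).add
      (hUy.mul hV31y)).sub (hV3y.mul hU1y)).sub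
      ((((ratB2 p x z h0).const_mul 3).mul hUy).mul hV3y)
  have hQy : pdy (Qfun p U V) x y z = deriv (fun t =>
      V x t z * (d3 (d1 (JJ U)) (x, t, z) - 3 * (p / (x - t - z) ^ 2) * U x t z)
        + U x t z * d3 (d1 (JJ V)) (x, t, z) - d3 (JJ V) (x, t, z) * d1 (JJ U) (x, t, z)
        - 3 * (p / (x - t - z)) * U x t z * d3 (JJ V) (x, t, z)) y := by
    simp only [pdy]
    exact eQ.deriv_eq
  have hQfull := hQy.trans kQ.deriv
  -- H_z
  have eH : (fun t => Hfun p lam U V x y t) =ᶠ[𝓝 z] (fun t =>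
      V x y t * (d2 (d1 (JJ U)) (x, y, t) - 3 * (p / (x - y - t) ^ 2) * U x y t
          + 3 * (p / (x - y - t)) * d2 (JJ U) (x, y, t))
        - d1 (JJ V) (x, y, t) * d2 (JJ U) (x, y, t)
        - 3 * (-p / (x - y - t)) * U x y t * d1 (JJ V) (x, y, t)
        + d2 (d1 (JJ V)) (x, y, t) * U x y t - 3 * lam * U x y t * V x y t) := by
    filter_upwards [ev_mem3 hΩopen hw] with t ht
    have h0t : x - y - t ≠ 0 := ne_of_gt (hΩ ht)
    simp only [Hfun]
    rw [deriv_ax p x y t h0t, tU21 x y t ht, tU2 x y t ht, tV1 x y t ht, tV21 x y t ht]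
  have kT1 := hVz.mul ((hU21z.sub (((ratSq3 p x y h0).const_mul 3).mul hUz)).add
      (((ratB3 p x y h0).const_mul 3).mul hU2z))
  have kT3 := (((ratA3 p x y h0).const_mul 3).mul hUz).mul hV1z
  have kT5 := (hUz.const_mul (3 * lam)).mul hVz
  have kH := (((kT1.sub (hV1z.mul hU2z)).sub kT3).add (hV21z.mul hUz)).sub kT5
  have hHz : pdz (Hfun p lam U V) x y z = deriv (fun t =>
      V x y t * (d2 (d1 (JJ U)) (x, y, t) - 3 * (p / (x - y - t) ^ 2) * U x y t
          + 3 * (p / (x - y - t)) * d2 (JJ U) (x, y, t))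
        - d1 (JJ V) (x, y, t) * d2 (JJ U) (x, y, t)
        - 3 * (-p / (x - y - t)) * U x y t * d1 (JJ V) (x, y, t)
        + d2 (d1 (JJ V)) (x, y, t) * U x y t - 3 * lam * U x y t * V x y t) z := by
    simp only [pdz]
    exact eH.deriv_eq
  have hHfull := hHz.trans kH.deriv
  -- Clairaut facts
  have c13U : d1 (d3 (JJ U)) (x, y, z) = d3 (d1 (JJ U)) (x, y, z) :=
    d_comm hΩopen cU2 hw (0, 0, 1) (1, 0, 0)
  have c12V : d1 (d2 (JJ V)) (x, y, z) = d2 (d1 (JJ V)) (x, y, z) :=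
    d_comm hΩopen cV2 hw (0, 1, 0) (1, 0, 0)
  have c23V : d2 (d3 (JJ V)) (x, y, z) = d3 (d2 (JJ V)) (x, y, z) :=
    d_comm hΩopen cV2 hw (0, 0, 1) (0, 1, 0)
  have c132U : d1 (d3 (d2 (JJ U))) (x, y, z) = d3 (d2 (d1 (JJ U))) (x, y, z) := by
    have h1 : d1 (d3 (d2 (JJ U))) (x, y, z) = d3 (d1 (d2 (JJ U))) (x, y, z) :=
      d_comm hΩopen cdU2 hw (0, 0, 1) (1, 0, 0)
    have h2 : d1 (d2 (JJ U)) =ᶠ[𝓝 ((x, y, z) : ℝ × ℝ × ℝ)] d2 (d1 (JJ U)) := by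
      filter_upwards [hΩopen.mem_nhds hw] with v hv
      exact d_comm hΩopen cU2 hv (0, 1, 0) (1, 0, 0)
    rw [h1, d3_congr h2]
  have c132V : d1 (d3 (d2 (JJ V))) (x, y, z) = d3 (d2 (d1 (JJ V))) (x, y, z) := by
    have h1 : d1 (d3 (d2 (JJ V))) (x, y, z) = d3 (d1 (d2 (JJ V))) (x, y, z) :=
      d_comm hΩopen cdV2 hw (0, 0, 1) (1, 0, 0)
    have h2 : d1 (d2 (JJ V)) =ᶠ[𝓝 ((x, y, z) : ℝ × ℝ × ℝ)] d2 (d1 (JJ V)) := by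
      filter_upwards [hΩopen.mem_nhds hw] with v hv
      exact d_comm hΩopen cV2 hv (0, 1, 0) (1, 0, 0)
    rw [h1, d3_congr h2]
  have c231U : d2 (d3 (d1 (JJ U))) (x, y, z) = d3 (d2 (d1 (JJ U))) (x, y, z) :=
    d_comm hΩopen cdU1 hw (0, 0, 1) (0, 1, 0)
  have c231V : d2 (d3 (d1 (JJ V))) (x, y, z) = d3 (d2 (d1 (JJ V))) (x, y, z) :=
    d_comm hΩopen cdV1 hw (0, 0, 1) (0, 1, 0)
  -- put everything together
  simp only [Lop, Lstar]
  rw [tU321 x y z hw, tU31 x y z hw, tU32 x y z hw, tU3 x y z hw, tV321 x y z hw,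
    tV3 x y z hw, hAVfull, hBVfull, hPfull, hQfull, hHfull,
    c13U, c12V, c23V, c132U, c132V, c231U, c231V]
  simp only [Pi.mul_apply, Pi.sub_apply, Pi.add_apply]
  ring
end
end

section
/- Let 0 < p < 1/2, let k, m be natural numbers with m ≤ k, and let real numbers x, y, s, ξ satisfy ξ < y and y + s < x. Then ∫_{y+s}^{x} (x−t)^{p−1+k−m} (t−s−y)^{p−1+k−m} (t−ξ−s)^{−2p+2m} dt = (Γ(p)²/Γ(2p)) · ((p)_{k−m})²/(2p)_{2k−2m} · (x−y−s)^{2p−1+2k−2m} (x−ξ−s)^{−2p+2m} · F(2p−2m, p+k−m; 2p+2k−2m; (x−y−s)/(x−ξ−s)). -/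
open Real MeasureTheory intervalIntegral

noncomputable section

lemma poch_zero (a : ℝ) : poch a 0 = 1 := by simp [poch]

lemma poch_succ (a : ℝ) (n : ℕ) : poch a (n + 1) = poch a n * (a + n) :=
  Finset.prod_range_succ _ _

lemma poch_succ' (a : ℝ) (n : ℕ) : poch a (n + 1) = a * poch (a + 1) n := by
  induction n with
  | zero => simp [poch_succ, poch_zero]
  | succ n ih =>
      rw [poch_succ, ih, poch_succ]
      push_cast; ring

lemma poch_pos {a : ℝ} (ha : 0 < a) (n : ℕ) : 0 < poch a n :=
  Finset.prod_pos fun i _ => by positivity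

lemma abs_term (α : ℝ) (w : ℝ) (n : ℕ) :
    |poch α n / n.factorial * w ^ n| = |poch α n| / n.factorial * |w| ^ n := by
  rw [abs_mul, abs_div, abs_pow, Nat.abs_cast]

lemma summable_abs_poch (α : ℝ) {w : ℝ} (h0 : 0 ≤ w) (hw : w < 1) :
    Summable fun n : ℕ => |poch α n| / n.factorial * w ^ n := by
  set r := (1 + w) / 2 with hr
  have hwr : w < r := by rw [hr]; linarith
  have hr1 : r < 1 := by rw [hr]; linarith
  have hr0 : 0 < r := by rw [hr]; linarith
  obtain ⟨N, hN⟩ := exists_nat_ge ((|α| * w - r) / (r - w))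
  refine summable_of_ratio_norm_eventually_le hr1 ?_
  filter_upwards [Filter.eventually_ge_atTop N] with n hn
  have hNn : ((N : ℝ)) ≤ n := Nat.cast_le.mpr hn
  have h1 : |α + n| * w ≤ r * (n + 1) := by
    have ha : |α + n| ≤ |α| + n := (abs_add_le _ _).trans (by simp)
    have h2 : |α| * w - r ≤ (n : ℝ) * (r - w) := by
      have := (div_le_iff₀ (by linarith : (0:ℝ) < r - w)).mp (hN.trans hNn)
      linarith
    nlinarith [abs_nonneg (α + n), abs_nonneg α]
  have hfac : (0:ℝ) < n.factorial := by positivity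
  have key : |α + n| * w / (n + 1) ≤ r := by
    rw [div_le_iff₀ (by positivity)]; linarith
  rw [Real.norm_eq_abs, Real.norm_eq_abs,
    abs_of_nonneg (mul_nonneg (by positivity) (pow_nonneg h0 _)),
    abs_of_nonneg (mul_nonneg (by positivity) (pow_nonneg h0 _)),
    poch_succ, abs_mul, Nat.factorial_succ, pow_succ, Nat.cast_mul]
  have expand : |poch α n| * |α + ↑n| / ((↑(n + 1) : ℝ) * ↑n.factorial) * (w ^ n * w)
      = (|poch α n| / ↑n.factorial * w ^ n) * (|α + ↑n| * w / (n + 1)) := by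
    have h1 : ((n:ℝ) + 1) ≠ 0 := by positivity
    have h2 : (↑n.factorial : ℝ) ≠ 0 := ne_of_gt hfac
    field_simp
    push_cast; ring
  rw [expand]
  calc (|poch α n| / ↑n.factorial * w ^ n) * (|α + ↑n| * w / (n + 1))
      ≤ (|poch α n| / ↑n.factorial * w ^ n) * r :=
        mul_le_mul_of_nonneg_left key (by positivity)
    _ = r * (|poch α n| / ↑n.factorial * w ^ n) := by ring

lemma summable_poch (α : ℝ) {w : ℝ} (hw : |w| < 1) :
    Summable fun n : ℕ => poch α n / n.factorial * w ^ n := by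
  refine Summable.of_abs ?_
  have := summable_abs_poch α (abs_nonneg w) hw
  simpa [abs_term, abs_div, Nat.abs_cast] using this

lemma hasSum_binomial (α : ℝ) {w : ℝ} (h0 : 0 ≤ w) (hw : w < 1) :
    HasSum (fun n : ℕ => poch α n / n.factorial * w ^ n) ((1 - w) ^ (-α)) := by
  set c : ℕ → ℝ := fun n => poch α n / n.factorial with hc
  set f : ℝ → ℝ := fun y => ∑' n : ℕ, c n * y ^ n with hf
  have hsum : ∀ y : ℝ, |y| < 1 → Summable fun n => c n * y ^ n := fun y hy =>
    summable_poch α hy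
  -- the radius we work in
  set r : ℝ := (1 + w) / 2 with hrdef
  have hwr : w < r := by rw [hrdef]; linarith
  have hr1 : r < 1 := by rw [hrdef]; linarith
  have hr0 : 0 < r := by rw [hrdef]; linarith
  set s : Set ℝ := Set.Ioo (-r) r with hs
  -- coefficient of derivative series
  -- bound for derivative terms
  set u : ℕ → ℝ := fun n => |α| * (|poch (α + 1) n| / n.factorial * r ^ n) with hu
  have hu_sum : Summable u := (summable_abs_poch (α + 1) (le_of_lt hr0) hr1).mul_left |α|
  set g : ℕ → ℝ → ℝ := fun n y => c (n + 1) * y ^ (n + 1) with hg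
  set g' : ℕ → ℝ → ℝ := fun n y => c (n + 1) * ((n + 1) * y ^ n) with hg'
  have hderiv_term : ∀ (n : ℕ) (y : ℝ), HasDerivAt (g n) (g' n y) y := by
    intro n y
    have := (hasDerivAt_pow (n + 1) y).const_mul (c (n + 1))
    simpa [hg, hg', mul_comm, mul_assoc, mul_left_comm] using this
  have habs_c : ∀ n : ℕ, |c (n + 1)| * (n + 1) = |α| * (|poch (α + 1) n| / n.factorial) := by
    intro n
    simp only [hc, abs_div, Nat.abs_cast, poch_succ', abs_mul, Nat.factorial_succ,
      Nat.cast_mul]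
    have h2 : (0:ℝ) < (n:ℝ) + 1 := by positivity
    have h3 : (0:ℝ) < (↑n.factorial : ℝ) := by positivity
    push_cast
    field_simp
  have hbound : ∀ (n : ℕ) (y : ℝ), y ∈ s → ‖g' n y‖ ≤ u n := by
    intro n y hy
    have hyr : |y| ≤ r := by
      rw [abs_le]; exact ⟨le_of_lt hy.1, le_of_lt hy.2⟩
    have : ‖g' n y‖ = |c (n + 1)| * ((n + 1) * |y| ^ n) := by
      show |c (n + 1) * (((n:ℝ) + 1) * y ^ n)| = _
      rw [abs_mul, abs_mul, abs_pow, abs_of_nonneg (show (0:ℝ) ≤ (n:ℝ) + 1 by positivity)]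
    rw [this, hu]
    have h1 : |c (n + 1)| * ((n + 1) * |y| ^ n) ≤ |c (n + 1)| * ((n + 1) * r ^ n) := by
      have := pow_le_pow_left₀ (abs_nonneg y) hyr n
      gcongr
    calc |c (n + 1)| * ((n + 1) * |y| ^ n) ≤ |c (n + 1)| * ((n + 1) * r ^ n) := h1
      _ = (|c (n + 1)| * (n + 1)) * r ^ n := by ring
      _ = |α| * (|poch (α + 1) n| / n.factorial) * r ^ n := by rw [habs_c]
      _ = |α| * (|poch (α + 1) n| / n.factorial * r ^ n) := by ring
  have hg0 : Summable fun n => g n 0 := by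
    apply (summable_zero).congr
    intro n; simp [hg]
  -- derivative of the tail sum
  have htail : ∀ y ∈ s, HasDerivAt (fun z => ∑' n, g n z) (∑' n, g' n y) y := by
    intro y hy
    exact hasDerivAt_tsum_of_isPreconnected hu_sum isOpen_Ioo (convex_Ioo _ _).isPreconnected
      (fun n z _ => hderiv_term n z) hbound (by constructor <;> [linarith; linarith] :
        (0:ℝ) ∈ s) hg0 hy
  -- f equals 1 + tail on Ioo (-1) 1
  have hfeq : ∀ y : ℝ, |y| < 1 → f y = 1 + ∑' n, g n y := by
    intro y hy
    rw [hf]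
    have := Summable.tsum_eq_zero_add (hsum y hy)
    simpa [hc, hg, poch_zero] using this
  set D : ℝ → ℝ := fun y => ∑' n, g' n y with hD
  have hfderiv : ∀ y ∈ s, HasDerivAt f (D y) y := by
    intro y hy
    have h1 : HasDerivAt (fun z => 1 + ∑' n, g n z) (D y) y := ((htail y hy).const_add 1)
    apply h1.congr_of_eventuallyEq
    have hopen : ∀ᶠ z in nhds y, z ∈ Set.Ioo (-(1:ℝ)) 1 := by
      apply (isOpen_Ioo).eventually_mem
      constructor <;> [linarith [hy.1]; linarith [hy.2]]
    filter_upwards [hopen] with z hz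
    exact hfeq z (abs_lt.mpr ⟨hz.1, hz.2⟩)
  -- the ODE : (1 - y) * D y = α * f y on s
  have hODE : ∀ y ∈ s, (1 - y) * D y = α * f y := by
    intro y hy
    have hy1 : |y| < 1 := by
      rw [abs_lt]; exact ⟨by linarith [hy.1], by linarith [hy.2]⟩
    have hS : HasSum (fun n => c n * y ^ n) (f y) := (hsum y hy1).hasSum
    have hDsummable : Summable fun n => g' n y :=
      Summable.of_norm_bounded hu_sum (fun n => hbound n y hy)
    have hDhas : HasSum (fun n => g' n y) (D y) := hDsummable.hasSum
    set G : ℕ → ℝ := fun n => (n : ℝ) * c n * y ^ n with hG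
    have hrec : ∀ n : ℕ, g' n y = α * (c n * y ^ n) + G n := by
      intro n
      have hcc : c (n + 1) * ((n:ℝ) + 1) = (α + n) * c n := by
        simp only [hc, poch_succ, Nat.factorial_succ, Nat.cast_mul]
        have h2 : ((n:ℝ) + 1) ≠ 0 := by positivity
        have h3 : (↑n.factorial : ℝ) ≠ 0 := by positivity
        push_cast
        field_simp
      show c (n + 1) * (((n:ℝ) + 1) * y ^ n) = _
      calc c (n + 1) * (((n:ℝ) + 1) * y ^ n) = (c (n + 1) * ((n:ℝ) + 1)) * y ^ n := by ring
        _ = ((α + n) * c n) * y ^ n := by rw [hcc]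
        _ = α * (c n * y ^ n) + G n := by simp only [hG]; ring
    have hshift : HasSum G (y * D y) := by
      have h2 : HasSum (fun n => y * g' n y) (y * D y) := hDhas.mul_left y
      have heq : (fun n : ℕ => G (n + 1)) = fun n => y * g' n y := by
        funext n
        simp only [hG, hg']
        push_cast
        ring
      have h1 : HasSum (fun n => G (n + 1)) (y * D y) := by rw [heq]; exact h2
      have h3 := (hasSum_nat_add_iff (f := G) 1).mp h1
      simpa [hG] using h3
    have hD' : HasSum (fun n => α * (c n * y ^ n) + G n) (D y) := by
      have heq : (fun n : ℕ => g' n y) = fun n => α * (c n * y ^ n) + G n := funext hrec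
      exact heq ▸ hDhas
    have hA : HasSum (fun n => α * (c n * y ^ n)) (α * f y) := hS.mul_left α
    have hG2 : HasSum G (D y - α * f y) := by
      have := hD'.sub hA
      simpa using this
    have huniq : y * D y = D y - α * f y := hshift.unique hG2
    linarith
  -- the function (1-z)^α * f z has zero derivative on [0, w]
  set φ : ℝ → ℝ := fun z => (1 - z) ^ α * f z with hφ
  have hφderiv : ∀ y ∈ Set.Icc (0:ℝ) w, HasDerivWithinAt φ 0 (Set.Icc 0 w) y := by
    intro y hy
    have hy_s : y ∈ s := by
      constructor
      · linarith [hy.1]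
      · linarith [hy.2]
    have h1y : (0:ℝ) < 1 - y := by linarith [hy.2]
    have inner : HasDerivAt (fun z : ℝ => 1 - z) (-1) y := by
      simpa using (hasDerivAt_id y).const_sub 1
    have outer := Real.hasDerivAt_rpow_const (x := 1 - y) (p := α) (Or.inl (ne_of_gt h1y))
    have d1 : HasDerivAt (fun z : ℝ => (1 - z) ^ α) (α * (1 - y) ^ (α - 1) * (-1)) y :=
      outer.comp y inner
    have d2 : HasDerivAt f (D y) y := hfderiv y hy_s
    have dprod := d1.mul d2
    have hval : α * (1 - y) ^ (α - 1) * (-1) * f y + (1 - y) ^ α * D y = 0 := by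
      have hsplit : (1 - y) ^ α = (1 - y) ^ (α - 1) * (1 - y) := by
        rw [← Real.rpow_add_one (ne_of_gt h1y) (α - 1)]
        ring_nf
      rw [hsplit]
      linear_combination ((1 - y) ^ (α - 1)) * hODE y hy_s
    rw [hval] at dprod
    exact dprod.hasDerivWithinAt
  have hconst : φ w = φ 0 := by
    have hb := norm_image_sub_le_of_norm_deriv_le_segment' (f' := fun _ => (0:ℝ))
      hφderiv (C := 0) (fun x _ => by simp) w (Set.right_mem_Icc.mpr h0)
    have : ‖φ w - φ 0‖ ≤ 0 := by simpa using hb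
    have := le_antisymm this (norm_nonneg _)
    rwa [norm_eq_zero, sub_eq_zero] at this
  have hf0 : f 0 = 1 := by
    show (∑' n : ℕ, c n * (0:ℝ) ^ n) = 1
    rw [tsum_eq_single 0 (fun n hn => by simp [zero_pow hn])]
    simp [hc, poch_zero]
  have hφ0 : φ 0 = 1 := by simp [hφ, hf0]
  have hkey : (1 - w) ^ α * f w = 1 := hconst.trans hφ0
  have h1w : (0:ℝ) < 1 - w := by linarith
  have hfw : f w = (1 - w) ^ (-α) := by
    have hpos := Real.rpow_pos_of_pos h1w α
    rw [Real.rpow_neg (le_of_lt h1w), ← one_div, eq_div_iff (ne_of_gt hpos)]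
    linear_combination hkey
  have hw' : |w| < 1 := by rw [abs_of_nonneg h0]; exact hw
  have := (hsum w hw').hasSum
  rw [show (∑' n : ℕ, c n * w ^ n) = f w from rfl, hfw] at this
  simpa [hc] using this

lemma beta_integrand_eq {s t : ℝ} {x : ℝ} (hx0 : 0 ≤ x) (hx1 : x ≤ 1) :
    ((x : ℂ) ^ ((s : ℂ) - 1) * ((1 : ℂ) - x) ^ ((t : ℂ) - 1))
      = ((x ^ (s - 1) * (1 - x) ^ (t - 1) : ℝ) : ℂ) := by
  have h1 : ((s : ℂ) - 1) = ((s - 1 : ℝ) : ℂ) := by push_cast; ring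
  have h2 : ((t : ℂ) - 1) = ((t - 1 : ℝ) : ℂ) := by push_cast; ring
  have h3 : ((1 : ℂ) - x) = (((1 - x : ℝ)) : ℂ) := by push_cast; ring
  rw [h1, h2, h3, ← Complex.ofReal_cpow hx0, ← Complex.ofReal_cpow (by linarith), ←
    Complex.ofReal_mul]

lemma intervalIntegrable_beta {s t : ℝ} (hs : 0 < s) (ht : 0 < t) :
    IntervalIntegrable (fun v : ℝ => v ^ (s - 1) * (1 - v) ^ (t - 1)) volume 0 1 := by
  have h := Complex.betaIntegral_convergent (u := (s : ℂ)) (v := (t : ℂ))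
    (by simpa using hs) (by simpa using ht)
  rw [intervalIntegrable_iff] at h ⊢
  have hre := h.re
  apply hre.congr
  have : Set.uIoc (0:ℝ) 1 = Set.Ioc 0 1 := Set.uIoc_of_le zero_le_one
  rw [this] at *
  filter_upwards [ae_restrict_mem measurableSet_Ioc] with x hx
  rw [beta_integrand_eq (le_of_lt hx.1) hx.2]
  simp

lemma betaReal {s t : ℝ} (hs : 0 < s) (ht : 0 < t) :
    ∫ v in (0:ℝ)..1, v ^ (s - 1) * (1 - v) ^ (t - 1)
      = Real.Gamma s * Real.Gamma t / Real.Gamma (s + t) := by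
  have h := Complex.Gamma_mul_Gamma_eq_betaIntegral (s := (s:ℂ)) (t := (t:ℂ))
    (by simpa using hs) (by simpa using ht)
  have key : Complex.betaIntegral s t
      = ((∫ v in (0:ℝ)..1, v ^ (s - 1) * (1 - v) ^ (t - 1) : ℝ) : ℂ) := by
    rw [Complex.betaIntegral, ← intervalIntegral.integral_ofReal]
    apply intervalIntegral.integral_congr
    intro x hx
    rw [Set.uIcc_of_le zero_le_one] at hx
    exact beta_integrand_eq hx.1 hx.2
  rw [key, ← Complex.ofReal_add, Complex.Gamma_ofReal, Complex.Gamma_ofReal,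
    Complex.Gamma_ofReal, ← Complex.ofReal_mul, ← Complex.ofReal_mul] at h
  have h' := Complex.ofReal_inj.mp h
  have hΓ : Real.Gamma (s + t) ≠ 0 := ne_of_gt (Real.Gamma_pos_of_pos (by linarith))
  field_simp
  linarith [h']

lemma Gamma_add_nat {a : ℝ} (ha : 0 < a) (n : ℕ) :
    Real.Gamma (a + n) = Real.Gamma a * poch a n := by
  induction n with
  | zero => simp [poch_zero]
  | succ n ih =>
      have hne : a + (n : ℝ) ≠ 0 := by positivity
      have : a + ((n : ℕ) + 1 : ℕ) = (a + n) + 1 := by push_cast; ring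
      rw [this, Real.Gamma_add_one hne, ih, poch_succ]
      ring

lemma core_euler {a z : ℝ} (α : ℝ) (ha : 0 < a) (hz0 : 0 ≤ z) (hz1 : z < 1) :
    ∫ v in (0:ℝ)..1, v ^ (a - 1) * (1 - v) ^ (a - 1) * (1 - z * v) ^ (-α)
      = Real.Gamma a ^ 2 / Real.Gamma (2 * a) * gaussF α a (2 * a) z := by
  set μ : Measure ℝ := volume.restrict (Set.Ioc 0 1) with hμ
  set F : ℕ → ℝ → ℝ := fun n v =>
    poch α n / n.factorial * z ^ n * (v ^ (a + n - 1) * (1 - v) ^ (a - 1)) with hF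
  -- integrability of each term
  have hInt : ∀ n : ℕ, Integrable (F n) μ := by
    intro n
    have h := intervalIntegrable_beta (s := a + n) (t := a) (by positivity) ha
    rw [intervalIntegrable_iff, Set.uIoc_of_le zero_le_one] at h
    exact (h.const_mul _)
  -- pointwise norm on (0,1]
  have hF_norm : ∀ n : ℕ, ∀ v ∈ Set.Ioc (0:ℝ) 1,
      ‖F n v‖ = |poch α n| / n.factorial * z ^ n * (v ^ (a + n - 1) * (1 - v) ^ (a - 1)) := by
    intro n v hv
    have h1 : (0:ℝ) ≤ v ^ (a + n - 1) := Real.rpow_nonneg (le_of_lt hv.1) _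
    have h2 : (0:ℝ) ≤ (1 - v) ^ (a - 1) := Real.rpow_nonneg (by linarith [hv.2]) _
    rw [Real.norm_eq_abs, hF]
    rw [abs_mul, abs_mul, abs_div, abs_pow, abs_of_nonneg hz0, abs_mul,
      abs_of_nonneg h1, abs_of_nonneg h2, Nat.abs_cast]
  -- bound for the integrals of norms
  set C : ℝ := ∫ v in (0:ℝ)..1, v ^ (a - 1) * (1 - v) ^ (a - 1) with hC
  have hC_int := intervalIntegrable_beta (s := a) (t := a) ha ha
  have hSum : Summable fun n => ∫ v, ‖F n v‖ ∂μ := by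
    apply Summable.of_nonneg_of_le (fun n => integral_nonneg (fun v => norm_nonneg _))
      (fun n => ?_) (((summable_abs_poch α hz0 hz1).mul_right C))
    have hbd : ∀ v ∈ Set.Ioc (0:ℝ) 1,
        ‖F n v‖ ≤ |poch α n| / n.factorial * z ^ n * (v ^ (a - 1) * (1 - v) ^ (a - 1)) := by
      intro v hv
      rw [hF_norm n v hv]
      have hv0 : (0:ℝ) < v := hv.1
      have hsplit : v ^ (a + n - 1) = v ^ (a - 1) * v ^ (n : ℕ) := by
        rw [← Real.rpow_natCast v n, ← Real.rpow_add hv0]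
        ring_nf
      have hvn : v ^ (n : ℕ) ≤ 1 := pow_le_one₀ (le_of_lt hv0) hv.2
      have h2 : (0:ℝ) ≤ (1 - v) ^ (a - 1) := Real.rpow_nonneg (by linarith [hv.2]) _
      have h1 : (0:ℝ) ≤ v ^ (a - 1) := Real.rpow_nonneg (le_of_lt hv0) _
      rw [hsplit]
      have : v ^ (a - 1) * v ^ (n:ℕ) ≤ v ^ (a - 1) := by
        nlinarith
      nlinarith [mul_le_mul_of_nonneg_right this h2, mul_nonneg (div_nonneg (abs_nonneg (poch α n)) (le_of_lt (by positivity : (0:ℝ) < n.factorial))) (pow_nonneg hz0 n)]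
    calc ∫ v, ‖F n v‖ ∂μ
        ≤ ∫ v in Set.Ioc (0:ℝ) 1, |poch α n| / n.factorial * z ^ n *
            (v ^ (a - 1) * (1 - v) ^ (a - 1)) := by
          apply setIntegral_mono_on (hInt n).norm ?_ measurableSet_Ioc hbd
          · have h := hC_int
            rw [intervalIntegrable_iff, Set.uIoc_of_le zero_le_one] at h
            exact h.const_mul _
      _ = |poch α n| / n.factorial * z ^ n * C := by
          rw [MeasureTheory.integral_const_mul, hC,
            intervalIntegral.integral_of_le zero_le_one]
  -- the main hasSum of integrals
  have hHasSum := MeasureTheory.hasSum_integral_of_summable_integral_norm hInt hSum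
  -- identify the integral of the tsum with the original integral
  have hptwise : ∀ v ∈ Set.Ioc (0:ℝ) 1,
      (∑' n, F n v) = v ^ (a - 1) * (1 - v) ^ (a - 1) * (1 - z * v) ^ (-α) := by
    intro v hv
    have hzv0 : 0 ≤ z * v := mul_nonneg hz0 (le_of_lt hv.1)
    have hzv1 : z * v < 1 := by nlinarith [hv.2, hv.1]
    have hbin := hasSum_binomial α hzv0 hzv1
    have hmul := hbin.mul_left (v ^ (a - 1) * (1 - v) ^ (a - 1))
    have heq : (fun n : ℕ => v ^ (a - 1) * (1 - v) ^ (a - 1) *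
        (poch α n / n.factorial * (z * v) ^ n)) = fun n => F n v := by
      funext n
      have hsplit : v ^ (a + n - 1) = v ^ (a - 1) * v ^ (n : ℕ) := by
        rw [← Real.rpow_natCast v n, ← Real.rpow_add hv.1]
        ring_nf
      rw [hF]
      simp only [hsplit, mul_pow]
      ring
    rw [heq] at hmul
    exact hmul.tsum_eq
  have hLHS : (∫ v, (∑' n, F n v) ∂μ)
      = ∫ v in (0:ℝ)..1, v ^ (a - 1) * (1 - v) ^ (a - 1) * (1 - z * v) ^ (-α) := by
    rw [intervalIntegral.integral_of_le zero_le_one]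
    exact setIntegral_congr_fun measurableSet_Ioc hptwise
  -- value of each integral
  have hval : ∀ n : ℕ, (∫ v, F n v ∂μ)
      = Real.Gamma a ^ 2 / Real.Gamma (2 * a) *
        (poch α n * poch a n / (poch (2 * a) n * n.factorial) * z ^ n) := by
    intro n
    have hbeta := betaReal (s := a + n) (t := a) (by positivity) ha
    have : (∫ v, F n v ∂μ)
        = poch α n / n.factorial * z ^ n * ∫ v in (0:ℝ)..1, v ^ (a + n - 1) * (1 - v) ^ (a - 1) := by
      rw [hF, intervalIntegral.integral_of_le zero_le_one, MeasureTheory.integral_const_mul]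
    rw [this, hbeta]
    rw [Gamma_add_nat ha n, show a + (n:ℝ) + a = 2 * a + n by ring,
      Gamma_add_nat (by positivity : (0:ℝ) < 2 * a) n]
    have hΓ2a : Real.Gamma (2 * a) ≠ 0 := ne_of_gt (Real.Gamma_pos_of_pos (by positivity))
    have hp2a : poch (2 * a) n ≠ 0 := ne_of_gt (poch_pos (by positivity) n)
    have hfac : (n.factorial : ℝ) ≠ 0 := by positivity
    field_simp
  -- conclude
  have heqF : (fun n => ∫ v, F n v ∂μ)
      = fun n => Real.Gamma a ^ 2 / Real.Gamma (2 * a) *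
        (poch α n * poch a n / (poch (2 * a) n * n.factorial) * z ^ n) := funext hval
  rw [heqF, hLHS] at hHasSum
  rw [← hHasSum.tsum_eq, gaussF, tsum_mul_left]

/-- Evaluation of the auxiliary integral `i` through the Gauss hypergeometric function:
`∫_{y+s}^{x} (x−t)^{p−1+k−m} (t−s−y)^{p−1+k−m} (t−ξ−s)^{−2p+2m} dt
  = (Γ(p)²/Γ(2p)) ((p)_{k−m})²/(2p)_{2k−2m} (x−y−s)^{2p−1+2k−2m} (x−ξ−s)^{−2p+2m}
    F(2p−2m, p+k−m; 2p+2k−2m; (x−y−s)/(x−ξ−s))`. -/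
theorem aux_integral_eval (p : ℝ) (hp0 : 0 < p) (hp : p < 1 / 2)
    (k m : ℕ) (hmk : m ≤ k) (x y s ξ : ℝ) (hξ : ξ < y) (hyx : y + s < x) :
    (∫ t in (y + s)..x, (x - t) ^ (p - 1 + (k : ℝ) - (m : ℝ)) *
        (t - s - y) ^ (p - 1 + (k : ℝ) - (m : ℝ)) *
        (t - ξ - s) ^ (-(2 * p) + 2 * (m : ℝ))) =
      (Real.Gamma p) ^ 2 / Real.Gamma (2 * p) *
        ((poch p (k - m)) ^ 2 / poch (2 * p) (2 * (k - m))) *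
        (x - y - s) ^ (2 * p - 1 + 2 * (k : ℝ) - 2 * (m : ℝ)) *
        (x - ξ - s) ^ (-(2 * p) + 2 * (m : ℝ)) *
        gaussF (2 * p - 2 * (m : ℝ)) (p + (k : ℝ) - (m : ℝ))
          (2 * p + 2 * (k : ℝ) - 2 * (m : ℝ)) ((x - y - s) / (x - ξ - s)) := by
  set n : ℕ := k - m with hn
  have hcast : (k : ℝ) - (m : ℝ) = (n : ℝ) := by
    rw [hn, Nat.cast_sub hmk]
  set a : ℝ := p + n with ha
  set α : ℝ := 2 * p - 2 * (m : ℝ) with hα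
  set A : ℝ := x - y - s with hA
  set B : ℝ := x - ξ - s with hB
  have hA0 : 0 < A := by rw [hA]; linarith
  have hAB : A < B := by rw [hA, hB]; linarith
  have hB0 : 0 < B := lt_trans hA0 hAB
  set z : ℝ := A / B with hz
  have hz0 : 0 ≤ z := le_of_lt (div_pos hA0 hB0)
  have hz1 : z < 1 := (div_lt_one hB0).mpr hAB
  have ha0 : 0 < a := by rw [ha]; positivity
  -- exponent rewrites
  have e1 : p - 1 + (k : ℝ) - (m : ℝ) = a - 1 := by rw [ha]; linarith [hcast]
  have e2 : -(2 * p) + 2 * (m : ℝ) = -α := by rw [hα]; ring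
  have e3 : 2 * p - 1 + 2 * (k : ℝ) - 2 * (m : ℝ) = 2 * a - 1 := by rw [ha]; linarith [hcast]
  have e4 : p + (k : ℝ) - (m : ℝ) = a := by rw [ha]; linarith [hcast]
  have e5 : 2 * p + 2 * (k : ℝ) - 2 * (m : ℝ) = 2 * a := by rw [ha]; linarith [hcast]
  rw [e1, e2, e3, e4, e5]
  set f : ℝ → ℝ := fun t => (x - t) ^ (a - 1) * (t - s - y) ^ (a - 1) * (t - ξ - s) ^ (-α)
    with hf
  -- substitution t = x - u * A
  have hsub : (∫ t in (y + s)..x, f t) = A * ∫ u in (0:ℝ)..1, f (x - u * A) := by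
    have h1 := intervalIntegral.integral_comp_mul_right (a := (0:ℝ)) (b := 1)
      (fun v => f (x - v)) (ne_of_gt hA0)
    simp only [zero_mul, one_mul, smul_eq_mul] at h1
    have h2 : (∫ v in (0:ℝ)..A, f (x - v)) = ∫ t in (x - A)..(x - 0), f t :=
      intervalIntegral.integral_comp_sub_left f x
    rw [h2] at h1
    have hxA : x - A = y + s := by rw [hA]; ring
    rw [hxA, sub_zero] at h1
    rw [h1, ← mul_assoc, mul_inv_cancel₀ (ne_of_gt hA0), one_mul]
  -- transform the integrand
  have htrans : (∫ u in (0:ℝ)..1, f (x - u * A))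
      = (A ^ (a - 1) * A ^ (a - 1) * B ^ (-α)) *
        ∫ u in (0:ℝ)..1, u ^ (a - 1) * (1 - u) ^ (a - 1) * (1 - z * u) ^ (-α) := by
    rw [← intervalIntegral.integral_const_mul]
    apply intervalIntegral.integral_congr
    intro u hu
    rw [Set.uIcc_of_le zero_le_one] at hu
    obtain ⟨hu0, hu1⟩ := hu
    have p1 : x - (x - u * A) = u * A := by ring
    have p2 : (x - u * A) - s - y = A * (1 - u) := by rw [hA]; ring
    have p3 : (x - u * A) - ξ - s = B * (1 - z * u) := by
      have hzz : B * (1 - z * u) = B - A * u := by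
        rw [hz]; field_simp
      rw [hzz, hB, hA]; ring
    have hzu : 0 ≤ 1 - z * u := by nlinarith
    rw [hf]
    simp only [p1, p2, p3]
    rw [Real.mul_rpow hu0 (le_of_lt hA0), Real.mul_rpow (le_of_lt hA0) (by linarith),
      Real.mul_rpow (le_of_lt hB0) hzu]
    ring
  rw [hsub, htrans, core_euler α ha0 hz0 hz1]
  -- final algebra with Gamma and poch
  have hga : Real.Gamma a = Real.Gamma p * poch p n := Gamma_add_nat hp0 n
  have hg2a : Real.Gamma (2 * a) = Real.Gamma (2 * p) * poch (2 * p) (2 * n) := by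
    have : 2 * a = 2 * p + ((2 * n : ℕ) : ℝ) := by rw [ha]; push_cast; ring
    rw [this, Gamma_add_nat (by positivity) (2 * n)]
  have hApow : A * (A ^ (a - 1) * A ^ (a - 1)) = A ^ (2 * a - 1) := by
    rw [← Real.rpow_add hA0, show A * (A ^ (a - 1 + (a - 1))) = A ^ (1:ℝ) * A ^ (a - 1 + (a - 1))
      from by rw [Real.rpow_one], ← Real.rpow_add hA0]
    ring_nf
  have hΓ2p : Real.Gamma (2 * p) ≠ 0 := ne_of_gt (Real.Gamma_pos_of_pos (by positivity))
  have hΓ2a : Real.Gamma (2 * a) ≠ 0 := ne_of_gt (Real.Gamma_pos_of_pos (by positivity))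
  have hpoch : poch (2 * p) (2 * n) ≠ 0 := ne_of_gt (poch_pos (by positivity) (2 * n))
  calc A * ((A ^ (a - 1) * A ^ (a - 1) * B ^ (-α)) *
        (Real.Gamma a ^ 2 / Real.Gamma (2 * a) * gaussF α a (2 * a) z))
      = (Real.Gamma a ^ 2 / Real.Gamma (2 * a)) * (A * (A ^ (a - 1) * A ^ (a - 1))) *
          B ^ (-α) * gaussF α a (2 * a) z := by ring
    _ = (Real.Gamma p ^ 2 / Real.Gamma (2 * p) * (poch p n ^ 2 / poch (2 * p) (2 * n))) *
          A ^ (2 * a - 1) * B ^ (-α) * gaussF α a (2 * a) z := by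
        rw [hApow, hga, hg2a]
        have hsep : (Real.Gamma p * poch p n) ^ 2 / (Real.Gamma (2 * p) * poch (2 * p) (2 * n))
            = Real.Gamma p ^ 2 / Real.Gamma (2 * p) * (poch p n ^ 2 / poch (2 * p) (2 * n)) := by
          field_simp
        rw [hsep]
end
end

section
/- Let 0 < p < 1/2 and λ ∈ ℝ. If a function U of the class W_p (with continuous functions T and N and data τ) satisfies the boundary condition U(x,0,z) = φ(x,z) for 0 ≤ z ≤ x, where τ(x,0) = 0, then N satisfies the two-dimensional Volterra integral equation of the first kind −∫_z^x ∫_0^{x−s} N(s,ξ) ξ^{−p} (x−ξ−s)^{−p} ₀F₁(1−p; −λ(x−ξ−s)ξ) dξ ds = φ(x,z) for all 0 ≤ z ≤ x. -/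
open Real MeasureTheory intervalIntegral

noncomputable section

/-- The confluent hypergeometric function `₀F₁(a; z) = ∑ zⁿ / ((a)_n n!)`. -/
def F01 (a z : ℝ) : ℝ := ∑' n : ℕ, z ^ n / (poch a n * n.factorial)

/-- The region `D = {(x,y) : 0 < y < x}`. -/
def regD : Set (ℝ × ℝ) := {w | 0 < w.2 ∧ w.2 < w.1}

/-- The form (27) of elements of the class `W_p` (case `0 < p < 1/2`). -/
def Wform (p lam : ℝ) (τ T N : ℝ → ℝ → ℝ) (x y z : ℝ) : ℝ :=
  τ x y
    - (∫ s in z..(x - y), ∫ ξ in (0 : ℝ)..y,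
        T s ξ * (y - ξ) ^ (-p) * (x - ξ - s) ^ (-p) *
          F01 (1 - p) (lam * (y - ξ) * (x - ξ - s)))
    - ∫ s in z..(x - y), ∫ ξ in y..(x - s),
        N s ξ * (x - ξ - s) ^ (-p) * (ξ - y) ^ (-p) *
          F01 (1 - p) (lam * (y - ξ) * (x - ξ - s))

/-- Setting `y = 0` in a function of the class `W_p` with `τ(x,0) = 0` and
subordinating it to the boundary condition `U(x,0,z) = φ(x,z)` reduces the
problem to the two-dimensional Volterra integral equation (36) for `N`. -/
theorem reduction_to_volterra (p lam : ℝ) (hp0 : 0 < p) (hp : p < 1 / 2)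
    (τ T N φ : ℝ → ℝ → ℝ) (U : ℝ → ℝ → ℝ → ℝ)
    (hT : ContinuousOn (fun w : ℝ × ℝ => T w.1 w.2) regD)
    (hN : ContinuousOn (fun w : ℝ × ℝ => N w.1 w.2) regD)
    (hU : ∀ x y z : ℝ, U x y z = Wform p lam τ T N x y z)
    (hτ0 : ∀ x : ℝ, τ x 0 = 0)
    (hbc : ∀ x z : ℝ, 0 ≤ z → z ≤ x → U x 0 z = φ x z) :
    ∀ x z : ℝ, 0 ≤ z → z ≤ x →
      -(∫ s in z..x, ∫ ξ in (0 : ℝ)..(x - s),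
          N s ξ * ξ ^ (-p) * (x - ξ - s) ^ (-p) *
            F01 (1 - p) (-lam * (x - ξ - s) * ξ)) = φ x z := by
  intro x z hz hxz
  rw [← hbc x z hz hxz, hU, Wform, hτ0]
  simp only [sub_zero, intervalIntegral.integral_same, zero_sub, neg_neg,
    intervalIntegral.integral_zero]
  rw [neg_inj]
  refine intervalIntegral.integral_congr fun s _ => ?_
  refine intervalIntegral.integral_congr fun ξ _ => ?_
  ring_nf
end
end
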